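/- Let C, D ⊂ [0,1] be general Cantor sets containing 0 and 1 with aperture ratios Ap(C), Ap(D), and let g : [0,1]² → ℝ be C¹ with ∂g/∂α > 0 and ∂g/∂β > 0 everywhere, such that for all (α, β) ∈ [0,1]², the ratio |∂g/∂α ÷ ∂g/∂β| lies in [Ap(C), Ap(C)⁻¹] ∩ [Ap(D), Ap(D)⁻¹]. Then {g(α, β) : α ∈ C, β ∈ D} = [g(0,0), g(1,1)]. -/

import Mathlib

/-- A construction scheme for a general Cantor set in `[0,1]`: intervals are
indexed by finite boolean strings; the interval of `s` is `[l s, r s]`, and it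
splits into the two children `[l s, r (false :: s)] ∪ [l (true :: s), r s]`
with `l s < r (false :: s) < l (true :: s) < r s`. -/
structure CantorScheme where
  l : List Bool → ℝ
  r : List Bool → ℝ
  l_nil : l [] = 0
  r_nil : r [] = 1
  l_false : ∀ s, l (false :: s) = l s
  r_true : ∀ s, r (true :: s) = r s
  lt1 : ∀ s, l s < r (false :: s)
  lt2 : ∀ s, r (false :: s) < l (true :: s)
  lt3 : ∀ s, l (true :: s) < r s

/-- The resulting Cantor set: the intersection over `n` of the unions of the
level-`n` intervals. -/
def CantorScheme.set (S : CantorScheme) : Set ℝ :=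
  ⋂ n : ℕ, ⋃ s ∈ {s : List Bool | s.length = n}, Set.Icc (S.l s) (S.r s)

/-- The aperture ratio: the supremum, over all construction steps, of the ratio
of the removed gap to each of the two retained subintervals. -/
noncomputable def CantorScheme.aperture (S : CantorScheme) : ℝ :=
  ⨆ s : List Bool,
    max ((S.l (true :: s) - S.r (false :: s)) / (S.r (false :: s) - S.l s))
        ((S.l (true :: s) - S.r (false :: s)) / (S.r s - S.l (true :: s)))

namespace CantorScheme

variable (S : CantorScheme)

/-- left endpoint of the gap removed from the interval of `s`. -/
def gl (s : List Bool) : ℝ := S.r (false :: s)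
/-- right endpoint of the gap removed from the interval of `s`. -/
def gr (s : List Bool) : ℝ := S.l (true :: s)

lemma gl_lt_gr (s : List Bool) : S.gl s < S.gr s := S.lt2 s

lemma l_lt_r (s : List Bool) : S.l s < S.r s :=
  (S.lt1 s).trans ((S.lt2 s).trans (S.lt3 s))

lemma cons_sub (a : Bool) (s : List Bool) :
    S.l s ≤ S.l (a :: s) ∧ S.r (a :: s) ≤ S.r s := by
  cases a
  · exact ⟨le_of_eq (S.l_false s).symm, le_of_lt ((S.lt2 s).trans (S.lt3 s))⟩
  · exact ⟨le_of_lt ((S.lt1 s).trans (S.lt2 s)), le_of_eq (S.r_true s)⟩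

lemma sub_interval (t s : List Bool) :
    S.l s ≤ S.l (t ++ s) ∧ S.r (t ++ s) ≤ S.r s := by
  induction t with
  | nil => exact ⟨le_rfl, le_rfl⟩
  | cons a t ih =>
      refine ⟨ih.1.trans ?_, le_trans ?_ ih.2⟩
      · exact (S.cons_sub a (t ++ s)).1
      · exact (S.cons_sub a (t ++ s)).2

lemma drop_sub (s : List Bool) : ∀ k, S.l (s.drop k) ≤ S.l s ∧ S.r s ≤ S.r (s.drop k) := by
  induction s with
  | nil => intro k; simp
  | cons a s ih =>
      intro k
      cases k with
      | zero => exact ⟨le_rfl, le_rfl⟩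
      | succ k =>
          simp only [List.drop_succ_cons]
          refine ⟨le_trans (ih k).1 (S.cons_sub a s).1, le_trans (S.cons_sub a s).2 (ih k).2⟩

lemma zero_le_l (s : List Bool) : 0 ≤ S.l s ∧ S.r s ≤ 1 := by
  induction s with
  | nil => simp [S.l_nil, S.r_nil]
  | cons a s ih =>
      exact ⟨le_trans ih.1 (S.cons_sub a s).1, le_trans (S.cons_sub a s).2 ih.2⟩

lemma l_nonneg (s : List Bool) : 0 ≤ S.l s := (S.zero_le_l s).1
lemma r_le_one (s : List Bool) : S.r s ≤ 1 := (S.zero_le_l s).2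
lemma l_le_one (s : List Bool) : S.l s ≤ 1 := (S.l_lt_r s).le.trans (S.r_le_one s)
lemma r_nonneg (s : List Bool) : 0 ≤ S.r s := (S.l_nonneg s).trans (S.l_lt_r s).le

lemma replicate_append_l (k : ℕ) (s : List Bool) :
    S.l (List.replicate k false ++ s) = S.l s := by
  induction k with
  | zero => simp
  | succ k ih => simpa [List.replicate_succ, S.l_false] using ih

lemma replicate_append_r (k : ℕ) (s : List Bool) :
    S.r (List.replicate k true ++ s) = S.r s := by
  induction k with
  | zero => simp
  | succ k ih => simpa [List.replicate_succ, S.r_true] using ih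

lemma mem_set_iff (x : ℝ) :
    x ∈ S.set ↔ ∀ n : ℕ, ∃ s : List Bool, s.length = n ∧ S.l s ≤ x ∧ x ≤ S.r s := by
  simp only [CantorScheme.set, Set.mem_iInter, Set.mem_iUnion, Set.mem_setOf_eq,
    Set.mem_Icc, exists_prop]

lemma mem_set_of_mem_interval (x : ℝ) (s₀ : List Bool)
    (h : ∀ n : ℕ, n ≥ s₀.length → ∃ s : List Bool, s.length = n ∧ S.l s ≤ x ∧ x ≤ S.r s)
    (hx : S.l s₀ ≤ x ∧ x ≤ S.r s₀) : x ∈ S.set := by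
  rw [S.mem_set_iff]
  intro n
  rcases le_or_gt s₀.length n with hn | hn
  · exact h n hn
  · refine ⟨s₀.drop (s₀.length - n), ?_, le_trans (S.drop_sub s₀ _).1 hx.1,
      le_trans hx.2 (S.drop_sub s₀ _).2⟩
    rw [List.length_drop]
    first | rfl | omega

lemma l_mem_set (s : List Bool) : S.l s ∈ S.set := by
  refine S.mem_set_of_mem_interval _ s (fun n hn => ?_) ⟨le_rfl, (S.l_lt_r s).le⟩
  refine ⟨List.replicate (n - s.length) false ++ s, ?_, ?_, ?_⟩
  · simp; omega
  · rw [S.replicate_append_l]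
  · have h2 := (S.l_lt_r (List.replicate (n - s.length) false ++ s)).le
    rw [S.replicate_append_l] at h2
    exact h2

lemma r_mem_set (s : List Bool) : S.r s ∈ S.set := by
  refine S.mem_set_of_mem_interval _ s (fun n hn => ?_) ⟨(S.l_lt_r s).le, le_rfl⟩
  refine ⟨List.replicate (n - s.length) true ++ s, ?_, ?_, ?_⟩
  · simp; omega
  · have h2 := (S.l_lt_r (List.replicate (n - s.length) true ++ s)).le
    rw [S.replicate_append_r] at h2
    exact h2
  · rw [S.replicate_append_r]

lemma zero_mem_set : (0 : ℝ) ∈ S.set := by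
  have := S.l_mem_set []; rwa [S.l_nil] at this

lemma one_mem_set : (1 : ℝ) ∈ S.set := by
  have := S.r_mem_set []; rwa [S.r_nil] at this

lemma set_subset_Icc : S.set ⊆ Set.Icc (0 : ℝ) 1 := by
  intro x hx
  rw [S.mem_set_iff] at hx
  obtain ⟨s, _, h1, h2⟩ := hx 0
  exact ⟨(S.l_nonneg s).trans h1, h2.trans (S.r_le_one s)⟩

lemma finite_len (n : ℕ) : {s : List Bool | s.length = n}.Finite :=
  List.finite_length_eq (α := Bool) n

lemma isClosed_set : IsClosed S.set := by
  refine isClosed_iInter (fun n => ?_)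
  exact Set.Finite.isClosed_biUnion (finite_len n) (fun s _ => isClosed_Icc)

lemma isCompact_set : IsCompact S.set :=
  (isCompact_Icc : IsCompact (Set.Icc (0:ℝ) 1)).of_isClosed_subset S.isClosed_set S.set_subset_Icc

/-- Same-length distinct strings have disjoint intervals. -/
lemma disjoint_same_len : ∀ (s t : List Bool), s.length = t.length → s ≠ t →
    ∀ x, (S.l s ≤ x ∧ x ≤ S.r s) → (S.l t ≤ x ∧ x ≤ S.r t) → False := by
  intro s
  induction s with
  | nil => intro t hlen hne; exact absurd (List.length_eq_zero_iff.mp hlen.symm).symm hne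
  | cons a s ih =>
      intro t hlen hne x hxs hxt
      cases t with
      | nil => simp at hlen
      | cons b t =>
          by_cases hst : s = t
          · subst hst
            -- a ≠ b; one of them is false and the other true
            have key : ∀ x, (S.l (false :: s) ≤ x ∧ x ≤ S.r (false :: s)) →
                (S.l (true :: s) ≤ x ∧ x ≤ S.r (true :: s)) → False := by
              intro z hzf hzt
              exact lt_irrefl z (lt_of_le_of_lt hzf.2 ((S.lt2 s).trans_le hzt.1))
            cases a <;> cases b
            · exact hne rfl
            · exact key x hxs hxt
            · exact key x hxt hxs
            · exact hne rfl
          · have hlen' : s.length = t.length := by simpa using hlen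
            exact ih t hlen' hst x
              ⟨le_trans (S.cons_sub a s).1 hxs.1, le_trans hxs.2 (S.cons_sub a s).2⟩
              ⟨le_trans (S.cons_sub b t).1 hxt.1, le_trans hxt.2 (S.cons_sub b t).2⟩

/-- The open gap of `s` contains no point of the Cantor set. -/
lemma gap_not_mem (s : List Bool) (x : ℝ) (h1 : S.gl s < x) (h2 : x < S.gr s) :
    x ∉ S.set := by
  intro hx
  rw [S.mem_set_iff] at hx
  obtain ⟨t, htlen, ht1, ht2⟩ := hx (s.length + 1)
  -- x is in the interval of s
  have hxs : S.l s ≤ x ∧ x ≤ S.r s :=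
    ⟨(S.lt1 s).le.trans h1.le, h2.le.trans (S.lt3 s).le⟩
  cases t with
  | nil => simp at htlen
  | cons b t =>
      have hlen' : t.length = s.length := by simpa using htlen
      by_cases hts : t = s
      · subst hts
        cases b
        · exact absurd h1 (not_lt.mpr ht2)
        · exact absurd h2 (not_lt.mpr ht1)
      · exact S.disjoint_same_len t s hlen' hts x
          ⟨le_trans (S.cons_sub b t).1 ht1, le_trans ht2 (S.cons_sub b t).2⟩ hxs

/-- Any "hole" of the Cantor set with endpoints in the set is a gap of the scheme. -/
lemma exists_gap (a b : ℝ) (ha : a ∈ S.set) (hb : b ∈ S.set) (hab : a < b)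
    (hfree : ∀ x ∈ S.set, x ∉ Set.Ioo a b) :
    ∃ s : List Bool, S.gl s = a ∧ S.gr s = b := by
  set x := (a + b) / 2 with hxdef
  have hax : a < x := by rw [hxdef]; linarith
  have hxb : x < b := by rw [hxdef]; linarith
  have hxnot : x ∉ S.set := fun hx => hfree x hx ⟨hax, hxb⟩
  rw [S.mem_set_iff] at hxnot
  push_neg at hxnot
  obtain ⟨n, hn⟩ := hxnot
  -- minimal such n
  have hex : ∃ n, ∀ s : List Bool, s.length = n → ¬(S.l s ≤ x ∧ x ≤ S.r s) := by
    refine ⟨n, fun s hs hmem => ?_⟩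
    exact absurd hmem.2 (not_le.mpr (hn s hs hmem.1))
  classical
  set N := Nat.find hex with hNdef
  have hN : ∀ s : List Bool, s.length = N → ¬(S.l s ≤ x ∧ x ≤ S.r s) := Nat.find_spec hex
  have hNpos : N ≠ 0 := by
    intro h0
    have := hN [] (by simp [h0])
    rw [S.l_nil, S.r_nil] at this
    have hx0 : (0:ℝ) ≤ x := le_trans (S.set_subset_Icc ha).1 hax.le
    have hx1 : x ≤ 1 := le_trans hxb.le (S.set_subset_Icc hb).2
    exact this ⟨hx0, hx1⟩
  obtain ⟨M, hM⟩ : ∃ M, N = M + 1 := ⟨N - 1, by omega⟩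
  have hMlt : M < N := by omega
  have hMx := Nat.find_min hex hMlt
  push_neg at hMx
  obtain ⟨σ, hσlen, hσmem⟩ := hMx
  -- x in interval of σ but in neither child: x is in the gap of σ
  have hgl : S.gl σ < x := by
    by_contra h
    push_neg at h
    exact hN (false :: σ) (by simp [hσlen, hM]) ⟨by rw [S.l_false]; exact hσmem.1, h⟩
  have hgr : x < S.gr σ := by
    by_contra h
    push_neg at h
    exact hN (true :: σ) (by simp [hσlen, hM]) ⟨h, by rw [S.r_true]; exact hσmem.2⟩
  -- endpoints of that gap are in the set and sandwich (a,b)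
  refine ⟨σ, ?_, ?_⟩
  · -- gl σ = a
    have hmem : S.gl σ ∈ S.set := S.r_mem_set (false :: σ)
    have h1 : S.gl σ ≤ a := by
      by_contra h
      push_neg at h
      exact hfree _ hmem ⟨h, hgl.trans hxb⟩
    have h2 : a ≤ S.gl σ := by
      by_contra h
      push_neg at h
      exact S.gap_not_mem σ a h (hax.trans hgr) ha
    linarith
  · have hmem : S.gr σ ∈ S.set := S.l_mem_set (true :: σ)
    have h1 : b ≤ S.gr σ := by
      by_contra h
      push_neg at h
      exact hfree _ hmem ⟨hax.trans hgr, h⟩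
    have h2 : S.gr σ ≤ b := by
      by_contra h
      push_neg at h
      exact S.gap_not_mem σ b (hgl.trans hxb) h hb
    linarith

lemma suffix_of_inter : ∀ (σ s : List Bool), s.length ≤ σ.length →
    ∀ x, (S.l s ≤ x ∧ x ≤ S.r s) → (S.l σ ≤ x ∧ x ≤ S.r σ) → s <:+ σ := by
  intro σ
  induction σ with
  | nil =>
      intro s hlen x _ _
      have : s = [] := List.length_eq_zero_iff.mp (Nat.le_zero.mp hlen)
      simp [this]
  | cons b σ ih =>
      intro s hlen x hxs hxσ
      rcases eq_or_lt_of_le hlen with heq | hlt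
      · by_cases hseq : s = b :: σ
        · exact hseq ▸ List.suffix_refl _
        · exact absurd (S.disjoint_same_len s (b :: σ) heq hseq x hxs hxσ) (fun h => h)
      · have hlen' : s.length ≤ σ.length := by simpa using Nat.lt_succ_iff.mp hlt
        have hxσ' : S.l σ ≤ x ∧ x ≤ S.r σ :=
          ⟨le_trans (S.cons_sub b σ).1 hxσ.1, le_trans hxσ.2 (S.cons_sub b σ).2⟩
        exact (ih s hlen' x hxs hxσ').trans (List.suffix_cons b σ)

/-- If the gap of `s` sits inside the interval of `σ`, then the whole interval
of `s` sits inside the interval of `σ`. -/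
lemma bridge_in (s σ : List Bool) (h1 : S.l σ ≤ S.gl s) (h2 : S.gr s ≤ S.r σ) :
    S.l σ ≤ S.l s ∧ S.r s ≤ S.r σ := by
  set x := (S.gl s + S.gr s) / 2 with hx
  have hglr := S.gl_lt_gr s
  have hx1 : S.gl s < x := by rw [hx]; linarith
  have hx2 : x < S.gr s := by rw [hx]; linarith
  have hxs : S.l s ≤ x ∧ x ≤ S.r s :=
    ⟨(S.lt1 s).le.trans hx1.le, hx2.le.trans (S.lt3 s).le⟩
  have hxσ : S.l σ ≤ x ∧ x ≤ S.r σ := ⟨h1.trans hx1.le, hx2.le.trans h2⟩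
  rcases le_or_gt σ.length s.length with hle | hlt
  · obtain ⟨t, ht⟩ := S.suffix_of_inter s σ hle x hxσ hxs
    subst ht
    exact ⟨(S.sub_interval t σ).1, (S.sub_interval t σ).2⟩
  · obtain ⟨t, ht⟩ := S.suffix_of_inter σ s hlt.le x hxs hxσ
    have htne : t ≠ [] := by
      intro h0; rw [h0] at ht; simp at ht; rw [ht] at hlt; exact lt_irrefl _ hlt
    rcases List.eq_nil_or_concat t with h0 | ⟨t', a, hta⟩
    · exact absurd h0 htne
    · exfalso
      have hσ : σ = t' ++ (a :: s) := by
        rw [← ht, hta]; simp [List.concat_eq_append, List.append_assoc]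
      have hsub := S.sub_interval t' (a :: s)
      rw [← hσ] at hsub
      have hxa : S.l (a :: s) ≤ x ∧ x ≤ S.r (a :: s) :=
        ⟨le_trans hsub.1 hxσ.1, le_trans hxσ.2 hsub.2⟩
      cases a
      · exact absurd hxa.2 (not_le.mpr hx1)
      · exact absurd hxa.1 (not_le.mpr hx2)

/-- Two "holes" of the Cantor set are equal or disjoint. -/
lemma gaps_eq_or_disjoint (a b a' b' : ℝ)
    (ha : a ∈ S.set) (hb : b ∈ S.set) (ha' : a' ∈ S.set) (hb' : b' ∈ S.set)
    (hfree : ∀ z ∈ S.set, z ∉ Set.Ioo a b) (hfree' : ∀ z ∈ S.set, z ∉ Set.Ioo a' b')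
    (x : ℝ) (hx : x ∈ Set.Ioo a b) (hx' : x ∈ Set.Ioo a' b') : a = a' ∧ b = b' := by
  constructor
  · rcases lt_trichotomy a a' with h | h | h
    · exact (hfree a' ha' (Set.mem_Ioo.mpr ⟨h, hx'.1.trans hx.2⟩)).elim
    · exact h
    · exact (hfree' a ha (Set.mem_Ioo.mpr ⟨h, hx.1.trans hx'.2⟩)).elim
  · rcases lt_trichotomy b b' with h | h | h
    · exact (hfree' b hb (Set.mem_Ioo.mpr ⟨hx'.1.trans hx.2, h⟩)).elim
    · exact h
    · exact (hfree b' hb' (Set.mem_Ioo.mpr ⟨hx.1.trans hx'.2, h⟩)).elim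


lemma l_le_gl (s : List Bool) : S.l s ≤ S.gl s := (S.lt1 s).le
lemma gr_le_r (s : List Bool) : S.gr s ≤ S.r s := (S.lt3 s).le
lemma gl_mem_set (s : List Bool) : S.gl s ∈ S.set := S.r_mem_set (false :: s)
lemma gr_mem_set (s : List Bool) : S.gr s ∈ S.set := S.l_mem_set (true :: s)
lemma gl_nonneg (s : List Bool) : 0 ≤ S.gl s := S.r_nonneg (false :: s)
lemma gr_le_one (s : List Bool) : S.gr s ≤ 1 := S.l_le_one (true :: s)
lemma gl_le_one (s : List Bool) : S.gl s ≤ 1 := (S.gl_lt_gr s).le.trans (S.gr_le_one s)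
lemma gr_nonneg (s : List Bool) : 0 ≤ S.gr s := (S.gl_nonneg s).trans (S.gl_lt_gr s).le
lemma gap_free (s : List Bool) : ∀ x ∈ S.set, x ∉ Set.Ioo (S.gl s) (S.gr s) :=
  fun x hx hmem => S.gap_not_mem s x hmem.1 hmem.2 hx

end CantorScheme

namespace HallAux

open Set

/-- the closed unit square -/
def QQ : Set (ℝ × ℝ) := Set.Icc ((0:ℝ), (0:ℝ)) ((1:ℝ), (1:ℝ))

lemma memQQ {a b : ℝ} (h0 : 0 ≤ a) (h1 : a ≤ 1) (h2 : 0 ≤ b) (h3 : b ≤ 1) :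
    ((a, b) : ℝ × ℝ) ∈ QQ := by
  constructor
  · exact ⟨h0, h2⟩
  · exact ⟨h1, h3⟩

lemma mvt_seg (g : ℝ × ℝ → ℝ) (hg : ContDiff ℝ 1 g) (p q : ℝ × ℝ)
    (hp : p ∈ QQ) (hq : q ∈ QQ) :
    ∃ ξ ∈ QQ, g q - g p =
      fderiv ℝ g ξ (1, 0) * (q.1 - p.1) + fderiv ℝ g ξ (0, 1) * (q.2 - p.2) := by
  set φ : ℝ → ℝ × ℝ := fun t => p + t • (q - p) with hφdef
  have hφ : ∀ t : ℝ, HasDerivAt φ (q - p) t := by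
    intro t
    have h1 : HasDerivAt (fun t : ℝ => t • (q - p)) ((1:ℝ) • (q - p)) t :=
      (hasDerivAt_id t).smul_const (q - p)
    simpa [hφdef] using h1.const_add p
  have hgd : Differentiable ℝ g := hg.differentiable one_ne_zero
  have hcomp : ∀ t : ℝ, HasDerivAt (g ∘ φ) (fderiv ℝ g (φ t) (q - p)) t := by
    intro t
    exact ((hgd (φ t)).hasFDerivAt).comp_hasDerivAt t (hφ t)
  have hcont : ContinuousOn (g ∘ φ) (Set.Icc (0:ℝ) 1) :=
    (hg.continuous.comp ((continuous_const.add (continuous_id.smul continuous_const)))).continuousOn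
  obtain ⟨c, hc, hceq⟩ := exists_hasDerivAt_eq_slope (g ∘ φ)
    (fun t => fderiv ℝ g (φ t) (q - p)) one_pos hcont (fun x _ => hcomp x)
  have hφ0 : φ 0 = p := by simp [hφdef]
  have hφ1 : φ 1 = q := by simp [hφdef]
  have hQconv : Convex ℝ QQ := by
    rw [QQ, ← Set.Icc_prod_Icc]
    exact (convex_Icc (0:ℝ) 1).prod (convex_Icc (0:ℝ) 1)
  have hmem : φ c ∈ QQ := by
    have := hQconv.add_smul_sub_mem hp hq ⟨hc.1.le, hc.2.le⟩
    exact this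
  refine ⟨φ c, hmem, ?_⟩
  have hsub : q - p = (q.1 - p.1) • ((1:ℝ), (0:ℝ)) + (q.2 - p.2) • ((0:ℝ), (1:ℝ)) := by
    ext <;> simp
  have : fderiv ℝ g (φ c) (q - p) = (g q - g p) / (1 - 0) := by
    rw [hceq]; rw [Function.comp_apply, Function.comp_apply, hφ0, hφ1]
  rw [hsub] at this
  rw [map_add, map_smul, map_smul, smul_eq_mul, smul_eq_mul] at this
  rw [show (1:ℝ) - 0 = 1 by ring, div_one] at this
  linarith [this]

section Core

variable {C D : CantorScheme} {g : ℝ × ℝ → ℝ} {y : ℝ}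

local notation "Dα" => fun p => fderiv ℝ g p (1, 0)
local notation "Dβ" => fun p => fderiv ℝ g p (0, 1)

/-- monotonicity of `g` on the square -/
lemma g_mono (hg : ContDiff ℝ 1 g)
    (hpos : ∀ p ∈ QQ, 0 < fderiv ℝ g p (1, 0) ∧ 0 < fderiv ℝ g p (0, 1))
    {a b a' b' : ℝ} (ha : ((a,b) : ℝ×ℝ) ∈ QQ) (hb : ((a',b') : ℝ×ℝ) ∈ QQ)
    (h1 : a ≤ a') (h2 : b ≤ b') : g (a, b) ≤ g (a', b') := by
  obtain ⟨ξ, hξ, heq⟩ := mvt_seg g hg (a, b) (a', b') ha hb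
  have h3 := (hpos ξ hξ).1
  have h4 := (hpos ξ hξ).2
  nlinarith [heq]

lemma g_strict_mono (hg : ContDiff ℝ 1 g)
    (hpos : ∀ p ∈ QQ, 0 < fderiv ℝ g p (1, 0) ∧ 0 < fderiv ℝ g p (0, 1))
    {a b a' b' : ℝ} (ha : ((a,b) : ℝ×ℝ) ∈ QQ) (hb : ((a',b') : ℝ×ℝ) ∈ QQ)
    (h1 : a ≤ a') (h2 : b ≤ b') (h3 : a < a' ∨ b < b') : g (a, b) < g (a', b') := by
  obtain ⟨ξ, hξ, heq⟩ := mvt_seg g hg (a, b) (a', b') ha hb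
  have h4 := (hpos ξ hξ).1
  have h5 := (hpos ξ hξ).2
  rcases h3 with h | h
  · nlinarith [heq]
  · nlinarith [heq]

end Core

lemma aperture_gap_le (S : CantorScheme)
    (hB : BddAbove (Set.range fun s : List Bool =>
      max ((S.l (true :: s) - S.r (false :: s)) / (S.r (false :: s) - S.l s))
          ((S.l (true :: s) - S.r (false :: s)) / (S.r s - S.l (true :: s))))) (s : List Bool) :
    S.gr s - S.gl s ≤ S.aperture * (S.gl s - S.l s) ∧
    S.gr s - S.gl s ≤ S.aperture * (S.r s - S.gr s) := by
  have hle := le_ciSup hB s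
  have h1 : (S.l (true :: s) - S.r (false :: s)) / (S.r (false :: s) - S.l s) ≤ S.aperture :=
    le_trans (le_max_left _ _) hle
  have h2 : (S.l (true :: s) - S.r (false :: s)) / (S.r s - S.l (true :: s)) ≤ S.aperture :=
    le_trans (le_max_right _ _) hle
  have hp1 : (0:ℝ) < S.r (false :: s) - S.l s := sub_pos.mpr (S.lt1 s)
  have hp2 : (0:ℝ) < S.r s - S.l (true :: s) := sub_pos.mpr (S.lt3 s)
  constructor
  · have := (div_le_iff₀ hp1).mp h1
    simpa [CantorScheme.gl, CantorScheme.gr] using this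
  · have := (div_le_iff₀ hp2).mp h2
    simpa [CantorScheme.gl, CantorScheme.gr] using this

lemma aperture_pos (S : CantorScheme)
    (hB : BddAbove (Set.range fun s : List Bool =>
      max ((S.l (true :: s) - S.r (false :: s)) / (S.r (false :: s) - S.l s))
          ((S.l (true :: s) - S.r (false :: s)) / (S.r s - S.l (true :: s))))) :
    0 < S.aperture := by
  have hle := le_ciSup hB ([] : List Bool)
  have h1 : (0:ℝ) < (S.l (true :: ([]:List Bool)) - S.r (false :: ([]:List Bool))) /
      (S.r (false :: ([]:List Bool)) - S.l ([]:List Bool)) :=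
    div_pos (sub_pos.mpr (S.lt2 [])) (sub_pos.mpr (S.lt1 []))
  exact lt_of_lt_of_le h1 (le_trans (le_max_left _ _) hle)

section Core2

variable {C D : CantorScheme} {g : ℝ × ℝ → ℝ} {y : ℝ}

lemma curve_pair (hg : ContDiff ℝ 1 g)
    (hpos : ∀ p ∈ QQ, 0 < fderiv ℝ g p (1, 0) ∧ 0 < fderiv ℝ g p (0, 1))
    (hratio : ∀ p ∈ QQ, |fderiv ℝ g p (1, 0) / fderiv ℝ g p (0, 1)| ∈
        Set.Icc C.aperture C.aperture⁻¹ ∩ Set.Icc D.aperture D.aperture⁻¹)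
    (hApC : 0 < C.aperture) (hApD : 0 < D.aperture)
    {x₁ β₁ x₂ β₂ : ℝ} (h1 : ((x₁, β₁) : ℝ×ℝ) ∈ QQ) (h2 : ((x₂, β₂) : ℝ×ℝ) ∈ QQ)
    (hx : x₁ ≤ x₂) (e1 : g (x₁, β₁) = y) (e2 : g (x₂, β₂) = y) :
    C.aperture * (x₂ - x₁) ≤ β₁ - β₂ ∧ D.aperture * (x₂ - x₁) ≤ β₁ - β₂ ∧
    C.aperture * (β₁ - β₂) ≤ x₂ - x₁ ∧ D.aperture * (β₁ - β₂) ≤ x₂ - x₁ := by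
  obtain ⟨ξ, hξ, heq⟩ := mvt_seg g hg (x₁, β₁) (x₂, β₂) h1 h2
  rw [e1, e2, sub_self] at heq
  set A := fderiv ℝ g ξ (1, 0) with hA
  set B := fderiv ℝ g ξ (0, 1) with hB
  have hApos : 0 < A := (hpos ξ hξ).1
  have hBpos : 0 < B := (hpos ξ hξ).2
  obtain ⟨⟨hc1, hc2⟩, ⟨hd1, hd2⟩⟩ := hratio ξ hξ
  rw [abs_of_pos (div_pos hApos hBpos)] at hc1 hc2 hd1 hd2
  -- A/B ∈ [ApC, ApC⁻¹] ∩ [ApD, ApD⁻¹]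
  have hCB : C.aperture * B ≤ A := by
    have := (le_div_iff₀ hBpos).mp hc1; linarith
  have hDB : D.aperture * B ≤ A := by
    have := (le_div_iff₀ hBpos).mp hd1; linarith
  have hCA : C.aperture * A ≤ B := by
    have h := (div_le_iff₀ hBpos).mp hc2
    calc C.aperture * A ≤ C.aperture * (C.aperture⁻¹ * B) := by
          apply mul_le_mul_of_nonneg_left _ hApC.le
          linarith
      _ = B := by field_simp
  have hDA : D.aperture * A ≤ B := by
    have h := (div_le_iff₀ hBpos).mp hd2
    calc D.aperture * A ≤ D.aperture * (D.aperture⁻¹ * B) := by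
          apply mul_le_mul_of_nonneg_left _ hApD.le
          linarith
      _ = B := by field_simp
  -- A * dx = B * db
  have hkey : A * (x₂ - x₁) = B * (β₁ - β₂) := by linarith [heq]
  have hdx : 0 ≤ x₂ - x₁ := by linarith
  have hdb : 0 ≤ β₁ - β₂ := by nlinarith
  refine ⟨?_, ?_, ?_, ?_⟩
  · nlinarith
  · nlinarith
  · nlinarith
  · nlinarith

lemma crossH (hg : ContDiff ℝ 1 g) {a b β : ℝ} (hab : a ≤ b)
    (hlt : g (a, β) < y) (hgt : y < g (b, β)) :
    ∃ x, a < x ∧ x < b ∧ g (x, β) = y := by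
  have hcont : ContinuousOn (fun x : ℝ => g (x, β)) (Set.Icc a b) :=
    (hg.continuous.comp (continuous_id.prodMk continuous_const)).continuousOn
  have := intermediate_value_Icc hab hcont
  obtain ⟨x, hx, hxy⟩ := this ⟨hlt.le, hgt.le⟩
  refine ⟨x, ?_, ?_, hxy⟩
  · rcases eq_or_lt_of_le hx.1 with h | h
    · exact absurd (h ▸ hxy) (ne_of_lt hlt)
    · exact h
  · rcases eq_or_lt_of_le hx.2 with h | h
    · exact absurd (h ▸ hxy) (ne_of_gt hgt)
    · exact h

lemma crossV (hg : ContDiff ℝ 1 g) {α a b : ℝ} (hab : a ≤ b)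
    (hlt : g (α, a) < y) (hgt : y < g (α, b)) :
    ∃ x, a < x ∧ x < b ∧ g (α, x) = y := by
  have hcont : ContinuousOn (fun x : ℝ => g (α, x)) (Set.Icc a b) :=
    (hg.continuous.comp (continuous_const.prodMk continuous_id)).continuousOn
  have := intermediate_value_Icc hab hcont
  obtain ⟨x, hx, hxy⟩ := this ⟨hlt.le, hgt.le⟩
  refine ⟨x, ?_, ?_, hxy⟩
  · rcases eq_or_lt_of_le hx.1 with h | h
    · exact absurd (h ▸ hxy) (ne_of_lt hlt)
    · exact h
  · rcases eq_or_lt_of_le hx.2 with h | h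
    · exact absurd (h ▸ hxy) (ne_of_gt hgt)
    · exact h

end Core2

end HallAux

namespace HallAux

section MkGap

lemma mk_gap (S : CantorScheme) {y : ℝ} (f : ℝ → ℝ) (hf : Continuous f)
    (hmono : MonotoneOn f (Set.Icc (0:ℝ) 1))
    (hnos : ∀ x ∈ S.set, f x ≠ y) {a b : ℝ} (ha : a ∈ S.set) (hb : b ∈ S.set)
    (hfa : f a < y) (hfb : y < f b) :
    ∃ p : List Bool, a ≤ S.gl p ∧ S.gr p ≤ b ∧ f (S.gl p) < y ∧ y < f (S.gr p) := by
  classical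
  set E1 : Set ℝ := S.set ∩ {x | f x ≤ y} with hE1
  set E2 : Set ℝ := S.set ∩ {x | y ≤ f x} with hE2
  have hE1c : IsCompact E1 :=
    S.isCompact_set.inter_right (isClosed_le hf continuous_const)
  have hE2c : IsCompact E2 :=
    S.isCompact_set.inter_right (isClosed_le continuous_const hf)
  have hE1ne : E1.Nonempty := ⟨a, ha, hfa.le⟩
  have hE2ne : E2.Nonempty := ⟨b, hb, hfb.le⟩
  set u := sSup E1 with hu
  set v := sInf E2 with hv
  have hum : u ∈ E1 := hE1c.sSup_mem hE1ne
  have hvm : v ∈ E2 := hE2c.sInf_mem hE2ne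
  have hfu : f u < y := lt_of_le_of_ne hum.2 (hnos u hum.1)
  have hfv : y < f v := lt_of_le_of_ne hvm.2 (fun h => (hnos v hvm.1) h.symm)
  have huv : u < v := by
    by_contra h
    push_neg at h
    have := hmono (S.set_subset_Icc hvm.1) (S.set_subset_Icc hum.1) h
    linarith
  have hau : a ≤ u := le_csSup hE1c.bddAbove ⟨ha, hfa.le⟩
  have hvb : v ≤ b := csInf_le hE2c.bddBelow ⟨hb, hfb.le⟩
  have hfree : ∀ x ∈ S.set, x ∉ Set.Ioo u v := by
    intro x hx hmem
    rcases le_or_gt (f x) y with h | h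
    · exact absurd (le_csSup hE1c.bddAbove ⟨hx, h⟩) (not_le.mpr hmem.1)
    · exact absurd (csInf_le hE2c.bddBelow ⟨hx, h.le⟩) (not_le.mpr hmem.2)
  obtain ⟨p, hp1, hp2⟩ := S.exists_gap u v hum.1 hvm.1 huv hfree
  exact ⟨p, hp1 ▸ hau, hp2 ▸ hvb, hp1 ▸ hfu, hp2 ▸ hfv⟩

end MkGap

section Steps

variable {C D : CantorScheme} {g : ℝ × ℝ → ℝ} {y : ℝ}

/-- convenient monotonicity wrapper -/
lemma gmle (hg : ContDiff ℝ 1 g)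
    (hpos : ∀ p ∈ QQ, 0 < fderiv ℝ g p (1, 0) ∧ 0 < fderiv ℝ g p (0, 1))
    {a b a' b' : ℝ} (h0 : 0 ≤ a) (h1 : a' ≤ 1) (h2 : 0 ≤ b) (h3 : b' ≤ 1)
    (haa : a ≤ a') (hbb : b ≤ b') : g (a, b) ≤ g (a', b') :=
  g_mono hg hpos (memQQ h0 (haa.trans h1) h2 (hbb.trans h3))
    (memQQ (h0.trans haa) h1 (h2.trans hbb) h3) haa hbb

lemma gmlt (hg : ContDiff ℝ 1 g)
    (hpos : ∀ p ∈ QQ, 0 < fderiv ℝ g p (1, 0) ∧ 0 < fderiv ℝ g p (0, 1))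
    {a b a' b' : ℝ} (h0 : 0 ≤ a) (h1 : a' ≤ 1) (h2 : 0 ≤ b) (h3 : b' ≤ 1)
    (haa : a ≤ a') (hbb : b ≤ b') (hne : a < a' ∨ b < b') : g (a, b) < g (a', b') :=
  g_strict_mono hg hpos (memQQ h0 (haa.trans h1) h2 (hbb.trans h3))
    (memQQ (h0.trans haa) h1 (h2.trans hbb) h3) haa hbb hne

/-- two points on the level curve are ordered oppositely in the two coordinates -/
lemma curve_order (hg : ContDiff ℝ 1 g)
    (hpos : ∀ p ∈ QQ, 0 < fderiv ℝ g p (1, 0) ∧ 0 < fderiv ℝ g p (0, 1))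
    {x₁ β₁ x₂ β₂ : ℝ} (h1 : ((x₁, β₁) : ℝ×ℝ) ∈ QQ) (h2 : ((x₂, β₂) : ℝ×ℝ) ∈ QQ)
    (hb : β₁ ≤ β₂) (e1 : g (x₁, β₁) = y) (e2 : g (x₂, β₂) = y) : x₂ ≤ x₁ := by
  by_contra h
  push_neg at h
  have := g_strict_mono hg hpos h1 h2 h.le hb (Or.inl h)
  rw [e1, e2] at this
  exact lt_irrefl _ this

lemma sliceV_mono (hg : ContDiff ℝ 1 g)
    (hpos : ∀ p ∈ QQ, 0 < fderiv ℝ g p (1, 0) ∧ 0 < fderiv ℝ g p (0, 1))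
    {α : ℝ} (h0 : 0 ≤ α) (h1 : α ≤ 1) :
    MonotoneOn (fun d : ℝ => g (α, d)) (Set.Icc (0:ℝ) 1) := by
  intro d hd d' hd' hdd
  exact gmle hg hpos h0 h1 hd.1 hd'.2 le_rfl hdd

lemma sliceH_mono (hg : ContDiff ℝ 1 g)
    (hpos : ∀ p ∈ QQ, 0 < fderiv ℝ g p (1, 0) ∧ 0 < fderiv ℝ g p (0, 1))
    {β : ℝ} (h0 : 0 ≤ β) (h1 : β ≤ 1) :
    MonotoneOn (fun c : ℝ => g (c, β)) (Set.Icc (0:ℝ) 1) := by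
  intro d hd d' hd' hdd
  exact gmle hg hpos hd.1 hd'.2 h0 h1 hdd le_rfl

/-- One refinement step from a "down" state. -/
lemma step_down
    (hg : ContDiff ℝ 1 g)
    (hpos : ∀ p ∈ QQ, 0 < fderiv ℝ g p (1, 0) ∧ 0 < fderiv ℝ g p (0, 1))
    (hratio : ∀ p ∈ QQ, |fderiv ℝ g p (1, 0) / fderiv ℝ g p (0, 1)| ∈
        Set.Icc C.aperture C.aperture⁻¹ ∩ Set.Icc D.aperture D.aperture⁻¹)
    (hApC : 0 < C.aperture) (hApD : 0 < D.aperture)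
    (hgapC : ∀ s, C.gr s - C.gl s ≤ C.aperture * (C.gl s - C.l s) ∧
      C.gr s - C.gl s ≤ C.aperture * (C.r s - C.gr s))
    (hgapD : ∀ t, D.gr t - D.gl t ≤ D.aperture * (D.gl t - D.l t) ∧
      D.gr t - D.gl t ≤ D.aperture * (D.r t - D.gr t))
    (hnosol : ∀ a ∈ C.set, ∀ b ∈ D.set, g (a, b) ≠ y)
    (s t : List Bool)
    (h1 : g (C.gl s, D.gl t) < y) (h2 : y < g (C.gl s, D.gr t))
    (h3 : y < g (C.gr s, D.gl t)) :
    ∃ s' t',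
      (g (C.gr s', D.gl t') < y ∧ y < g (C.gr s', D.gr t') ∧ g (C.gl s', D.gr t') < y) ∧
      ((t' = t ∧ C.gr s' - C.gl s' < D.gr t - D.gl t ∧
          D.gr t - D.gl t ≤ C.gr s - C.gl s) ∨
       (s' = s ∧ D.gr t' - D.gl t' < C.gr s - C.gl s ∧
          C.gr s - C.gl s ≤ D.gr t - D.gl t)) := by
  classical
  set u := C.gl s with hu
  set v := C.gr s with hv
  set w := D.gl t with hw
  set z := D.gr t with hz
  have huv : u < v := C.gl_lt_gr s
  have hwz : w < z := D.gl_lt_gr t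
  have hu0 : 0 ≤ u := C.gl_nonneg s
  have hu1 : u ≤ 1 := C.gl_le_one s
  have hv0 : 0 ≤ v := C.gr_nonneg s
  have hv1 : v ≤ 1 := C.gr_le_one s
  have hw0 : 0 ≤ w := D.gl_nonneg t
  have hw1 : w ≤ 1 := D.gl_le_one t
  have hz0 : 0 ≤ z := D.gr_nonneg t
  have hz1 : z ≤ 1 := D.gr_le_one t
  rcases le_or_gt (D.gr t - D.gl t) (C.gr s - C.gl s) with hcmp | hcmp
  · -- LEFT move : replace the C-gap
    set A := C.l s with hA
    have hA0 : 0 ≤ A := C.l_nonneg s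
    have hAu : A ≤ u := C.l_le_gl s
    -- the escape is available
    have hesc : g (A, z) < y := by
      rcases lt_trichotomy (g (A, z)) y with h | h | h
      · exact h
      · exact absurd h (hnosol A (C.l_mem_set s) z (D.gr_mem_set t))
      · exfalso
        have hAw : g (A, w) < y :=
          lt_of_le_of_lt (gmle hg hpos hA0 hu1 hw0 hw1 hAu le_rfl) h1
        obtain ⟨βA, hβA1, hβA2, hβA3⟩ := crossV hg hwz.le hAw h
        obtain ⟨βu, hβu1, hβu2, hβu3⟩ := crossV hg hwz.le h1 h2
        have hcp := curve_pair hg hpos hratio hApC hApD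
          (memQQ hA0 (hAu.trans hu1) (hw0.trans hβA1.le) (hβA2.le.trans hz1))
          (memQQ hu0 hu1 (hw0.trans hβu1.le) (hβu2.le.trans hz1)) hAu hβA3 hβu3
        have := (hgapC s).1
        -- v - u ≤ ApC * (u - A) ≤ βA - βu < z - w ≤ v - u
        have hlt : βA - βu < z - w := by linarith
        linarith [hcp.1]
    -- build the new C-gap between A and u at height z
    have hmono : MonotoneOn (fun c : ℝ => g (c, z)) (Set.Icc (0:ℝ) 1) :=
      sliceH_mono hg hpos hz0 hz1
    obtain ⟨p, hp1, hp2, hp3, hp4⟩ := mk_gap C (fun c => g (c, z))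
      (hg.continuous.comp (continuous_id.prodMk continuous_const))
      hmono (fun x hx => hnosol x hx z (D.gr_mem_set t))
      (C.l_mem_set s) (C.gl_mem_set s) hesc h2
    -- p : A ≤ gl p, gr p ≤ u, g(gl p, z) < y, y < g(gr p, z)
    have hbr : C.l (false :: s) ≤ C.l p ∧ C.r p ≤ C.r (false :: s) := by
      apply C.bridge_in
      · rw [C.l_false]; exact hp1
      · exact hp2
    have hlp : A ≤ C.l p := by have h := hbr.1; rwa [C.l_false] at h
    have hrp : C.r p ≤ u := hbr.2
    have hglp0 : 0 ≤ C.gl p := C.gl_nonneg p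
    have hgrp : C.gr p ≤ u := (C.gr_le_r p).trans hrp
    have hgrp0 : 0 ≤ C.gr p := C.gr_nonneg p
    have hgrp1 : C.gr p ≤ 1 := C.gr_le_one p
    refine ⟨p, t, ⟨?_, hp4, hp3⟩, Or.inl ⟨rfl, ?_, hcmp⟩⟩
    · exact lt_of_le_of_lt (gmle hg hpos hgrp0 hu1 hw0 hw1 hgrp le_rfl) h1
    · -- size bound : gr p - gl p < z - w
      have hb1 : g (C.gr p, w) < y :=
        lt_of_le_of_lt (gmle hg hpos hgrp0 hu1 hw0 hw1 hgrp le_rfl) h1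
      obtain ⟨b₁, hb₁1, hb₁2, hb₁3⟩ := crossV hg hwz.le hb1 hp4
      have hrp0 : 0 ≤ C.r p := C.r_nonneg p
      have hrp1 : C.r p ≤ 1 := C.r_le_one p
      have hc1 : g (C.r p, w) < y :=
        lt_of_le_of_lt (gmle hg hpos hrp0 hu1 hw0 hw1 hrp le_rfl) h1
      have hc2 : y < g (C.r p, z) :=
        lt_of_lt_of_le hp4 (gmle hg hpos hgrp0 hrp1 hz0 hz1 (C.gr_le_r p) le_rfl)
      obtain ⟨b₂, hb₂1, hb₂2, hb₂3⟩ := crossV hg hwz.le hc1 hc2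
      have hcp := curve_pair hg hpos hratio hApC hApD
        (memQQ hgrp0 hgrp1 (hw0.trans hb₁1.le) (hb₁2.le.trans hz1))
        (memQQ hrp0 hrp1 (hw0.trans hb₂1.le) (hb₂2.le.trans hz1))
        (C.gr_le_r p) hb₁3 hb₂3
      have := (hgapC p).2
      have hlt : b₁ - b₂ < z - w := by linarith
      linarith [hcp.1]
  · -- RIGHT move : replace the D-gap
    set W := D.l t with hW
    have hW0 : 0 ≤ W := D.l_nonneg t
    have hWw : W ≤ w := D.l_le_gl t
    have hWw' : W < w := D.lt1 t
    have hesc : g (v, W) < y := by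
      rcases lt_trichotomy (g (v, W)) y with h | h | h
      · exact h
      · exact absurd h (hnosol v (C.gr_mem_set s) W (D.l_mem_set t))
      · exfalso
        obtain ⟨x₁, hx₁1, hx₁2, hx₁3⟩ := crossH hg huv.le h1 h3
        have hx₁0 : 0 ≤ x₁ := hu0.trans hx₁1.le
        have hx₁1' : x₁ ≤ 1 := hx₁2.le.trans hv1
        have hxW : g (x₁, W) < y := by
          rw [← hx₁3]
          exact gmlt hg hpos hx₁0 hx₁1' hW0 hw1 le_rfl hWw (Or.inr hWw')
        obtain ⟨xW, hxW1, hxW2, hxW3⟩ := crossH hg hx₁2.le hxW h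
        have hxW0 : 0 ≤ xW := hx₁0.trans hxW1.le
        have hxW1' : xW ≤ 1 := hxW2.le.trans hv1
        have hcp := curve_pair hg hpos hratio hApC hApD
          (memQQ hx₁0 hx₁1' hw0 hw1)
          (memQQ hxW0 hxW1' hW0 (hWw.trans hw1)) hxW1.le hx₁3 hxW3
        have := (hgapD t).1
        have hlt : xW - x₁ < v - u := by linarith
        linarith [hcp.2.2.2]
    have hmono : MonotoneOn (fun d : ℝ => g (v, d)) (Set.Icc (0:ℝ) 1) :=
      sliceV_mono hg hpos hv0 hv1
    obtain ⟨p, hp1, hp2, hp3, hp4⟩ := mk_gap D (fun d => g (v, d))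
      (hg.continuous.comp (continuous_const.prodMk continuous_id))
      hmono (fun x hx => hnosol v (C.gr_mem_set s) x hx)
      (D.l_mem_set t) (D.gl_mem_set t) hesc h3
    -- p : W ≤ gl p, gr p ≤ w, g(v, gl p) < y, y < g(v, gr p)
    have hbr : D.l (false :: t) ≤ D.l p ∧ D.r p ≤ D.r (false :: t) := by
      apply D.bridge_in
      · rw [D.l_false]; exact hp1
      · exact hp2
    have hlp : W ≤ D.l p := by have h := hbr.1; rwa [D.l_false] at h
    have hrp : D.r p ≤ w := hbr.2
    have hgrp : D.gr p ≤ w := (D.gr_le_r p).trans hrp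
    have hgrp0 : 0 ≤ D.gr p := D.gr_nonneg p
    have hglp0 : 0 ≤ D.gl p := D.gl_nonneg p
    refine ⟨s, p, ⟨hp3, hp4, ?_⟩, Or.inr ⟨rfl, ?_, hcmp.le⟩⟩
    · exact lt_of_le_of_lt (gmle hg hpos hu0 hu1 hgrp0 hw1 le_rfl hgrp) h1
    · -- size bound : gr p - gl p < v - u
      have ha1 : g (u, D.gr p) < y :=
        lt_of_le_of_lt (gmle hg hpos hu0 hu1 hgrp0 hw1 le_rfl hgrp) h1
      obtain ⟨xa, hxa1, hxa2, hxa3⟩ := crossH hg huv.le ha1 hp4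
      have hrt0 : 0 ≤ D.r p := D.r_nonneg p
      have hrt1 : D.r p ≤ 1 := D.r_le_one p
      have hrtw : D.r p ≤ w := hrp
      have hc1 : g (u, D.r p) < y :=
        lt_of_le_of_lt (gmle hg hpos hu0 hu1 hrt0 hw1 le_rfl hrtw) h1
      have hc2 : y < g (v, D.r p) :=
        lt_of_lt_of_le hp4 (gmle hg hpos hv0 hv1 hgrp0 hrt1 le_rfl (D.gr_le_r p))
      obtain ⟨xb, hxb1, hxb2, hxb3⟩ := crossH hg huv.le hc1 hc2
      -- order: (xb, r p) and (xa, gr p) with heights gr p ≤ r p so xb ≤ xa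
      have hord : xb ≤ xa :=
        curve_order hg hpos
          (memQQ (hu0.trans hxa1.le) (hxa2.le.trans hv1) hgrp0 (hgrp.trans hw1))
          (memQQ (hu0.trans hxb1.le) (hxb2.le.trans hv1) hrt0 hrt1)
          (D.gr_le_r p) hxa3 hxb3
      have hcp := curve_pair hg hpos hratio hApC hApD
        (memQQ (hu0.trans hxb1.le) (hxb2.le.trans hv1) hrt0 hrt1)
        (memQQ (hu0.trans hxa1.le) (hxa2.le.trans hv1) hgrp0 (hgrp.trans hw1))
        hord hxb3 hxa3
      have := (hgapD p).2
      have hlt : xa - xb < v - u := by linarith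
      linarith [hcp.2.2.2]

/-- One refinement step from an "up" state. -/
lemma step_up
    (hg : ContDiff ℝ 1 g)
    (hpos : ∀ p ∈ QQ, 0 < fderiv ℝ g p (1, 0) ∧ 0 < fderiv ℝ g p (0, 1))
    (hratio : ∀ p ∈ QQ, |fderiv ℝ g p (1, 0) / fderiv ℝ g p (0, 1)| ∈
        Set.Icc C.aperture C.aperture⁻¹ ∩ Set.Icc D.aperture D.aperture⁻¹)
    (hApC : 0 < C.aperture) (hApD : 0 < D.aperture)
    (hgapC : ∀ s, C.gr s - C.gl s ≤ C.aperture * (C.gl s - C.l s) ∧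
      C.gr s - C.gl s ≤ C.aperture * (C.r s - C.gr s))
    (hgapD : ∀ t, D.gr t - D.gl t ≤ D.aperture * (D.gl t - D.l t) ∧
      D.gr t - D.gl t ≤ D.aperture * (D.r t - D.gr t))
    (hnosol : ∀ a ∈ C.set, ∀ b ∈ D.set, g (a, b) ≠ y)
    (s t : List Bool)
    (h1 : g (C.gr s, D.gl t) < y) (h2 : y < g (C.gr s, D.gr t))
    (h3 : g (C.gl s, D.gr t) < y) :
    ∃ s' t',
      (g (C.gl s', D.gl t') < y ∧ y < g (C.gl s', D.gr t') ∧ y < g (C.gr s', D.gl t')) ∧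
      ((t' = t ∧ C.gr s' - C.gl s' < D.gr t - D.gl t ∧
          D.gr t - D.gl t ≤ C.gr s - C.gl s) ∨
       (s' = s ∧ D.gr t' - D.gl t' < C.gr s - C.gl s ∧
          C.gr s - C.gl s ≤ D.gr t - D.gl t)) := by
  classical
  set u := C.gl s with hu
  set v := C.gr s with hv
  set w := D.gl t with hw
  set z := D.gr t with hz
  have huv : u < v := C.gl_lt_gr s
  have hwz : w < z := D.gl_lt_gr t
  have hu0 : 0 ≤ u := C.gl_nonneg s
  have hu1 : u ≤ 1 := C.gl_le_one s
  have hv0 : 0 ≤ v := C.gr_nonneg s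
  have hv1 : v ≤ 1 := C.gr_le_one s
  have hw0 : 0 ≤ w := D.gl_nonneg t
  have hw1 : w ≤ 1 := D.gl_le_one t
  have hz0 : 0 ≤ z := D.gr_nonneg t
  have hz1 : z ≤ 1 := D.gr_le_one t
  rcases le_or_gt (D.gr t - D.gl t) (C.gr s - C.gl s) with hcmp | hcmp
  · -- DOWN move : replace the C-gap (to the right)
    set V := C.r s with hV
    have hV1 : V ≤ 1 := C.r_le_one s
    have hvV : v ≤ V := C.gr_le_r s
    have hesc : y < g (V, w) := by
      rcases lt_trichotomy (g (V, w)) y with h | h | h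
      · exfalso
        obtain ⟨b₁, hb₁1, hb₁2, hb₁3⟩ := crossV hg hwz.le h1 h2
        have hVz : y < g (V, z) :=
          lt_of_lt_of_le h2 (gmle hg hpos hv0 hV1 hz0 hz1 hvV le_rfl)
        obtain ⟨b₂, hb₂1, hb₂2, hb₂3⟩ := crossV hg hwz.le h hVz
        have hcp := curve_pair hg hpos hratio hApC hApD
          (memQQ hv0 hv1 (hw0.trans hb₁1.le) (hb₁2.le.trans hz1))
          (memQQ (hv0.trans hvV) hV1 (hw0.trans hb₂1.le) (hb₂2.le.trans hz1))
          hvV hb₁3 hb₂3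
        have := (hgapC s).2
        have hlt : b₁ - b₂ < z - w := by linarith
        linarith [hcp.1]
      · exact absurd h (hnosol V (C.r_mem_set s) w (D.gl_mem_set t))
      · exact h
    have hmono : MonotoneOn (fun c : ℝ => g (c, w)) (Set.Icc (0:ℝ) 1) :=
      sliceH_mono hg hpos hw0 hw1
    obtain ⟨p, hp1, hp2, hp3, hp4⟩ := mk_gap C (fun c => g (c, w))
      (hg.continuous.comp (continuous_id.prodMk continuous_const))
      hmono (fun x hx => hnosol x hx w (D.gl_mem_set t))
      (C.gr_mem_set s) (C.r_mem_set s) h1 hesc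
    -- p : v ≤ gl p, gr p ≤ V, g(gl p, w) < y, y < g(gr p, w)
    have hbr : C.l (true :: s) ≤ C.l p ∧ C.r p ≤ C.r (true :: s) := by
      apply C.bridge_in
      · exact hp1
      · rw [C.r_true]; exact hp2
    have hlp : v ≤ C.l p := hbr.1
    have hrp : C.r p ≤ V := by have h := hbr.2; rwa [C.r_true] at h
    have hglp : v ≤ C.gl p := hlp.trans (C.l_le_gl p)
    have hglp0 : 0 ≤ C.gl p := C.gl_nonneg p
    have hglp1 : C.gl p ≤ 1 := C.gl_le_one p
    have hlp0 : 0 ≤ C.l p := C.l_nonneg p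
    refine ⟨p, t, ⟨hp3, ?_, hp4⟩, Or.inl ⟨rfl, ?_, hcmp⟩⟩
    · exact lt_of_lt_of_le h2 (gmle hg hpos hv0 hglp1 hz0 hz1 hglp le_rfl)
    · -- size bound : gr p - gl p < z - w
      have hq2 : y < g (C.gl p, z) :=
        lt_of_lt_of_le h2 (gmle hg hpos hv0 hglp1 hz0 hz1 hglp le_rfl)
      obtain ⟨b, hb1, hb2, hb3⟩ := crossV hg hwz.le hp3 hq2
      have hlw : g (C.l p, w) < y :=
        lt_of_le_of_lt (gmle hg hpos hlp0 hglp1 hw0 hw1 (C.l_le_gl p) le_rfl) hp3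
      have hlz : y < g (C.l p, z) :=
        lt_of_lt_of_le h2 (gmle hg hpos hv0 (C.l_le_one p) hz0 hz1 hlp le_rfl)
      obtain ⟨b', hb'1, hb'2, hb'3⟩ := crossV hg hwz.le hlw hlz
      have hcp := curve_pair hg hpos hratio hApC hApD
        (memQQ hlp0 ((C.l_le_gl p).trans hglp1) (hw0.trans hb'1.le) (hb'2.le.trans hz1))
        (memQQ hglp0 hglp1 (hw0.trans hb1.le) (hb2.le.trans hz1))
        (C.l_le_gl p) hb'3 hb3
      have := (hgapC p).1
      have hlt : b' - b < z - w := by linarith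
      linarith [hcp.1]
  · -- UP move : replace the D-gap (upwards)
    set Z := D.r t with hZ
    have hZ1 : Z ≤ 1 := D.r_le_one t
    have hzZ : z ≤ Z := D.gr_le_r t
    have hesc : y < g (u, Z) := by
      rcases lt_trichotomy (g (u, Z)) y with h | h | h
      · exfalso
        obtain ⟨xa, hxa1, hxa2, hxa3⟩ := crossH hg huv.le h3 h2
        have hvZ : y < g (v, Z) :=
          lt_of_lt_of_le h2 (gmle hg hpos hv0 hv1 hz0 hZ1 le_rfl hzZ)
        obtain ⟨xb, hxb1, hxb2, hxb3⟩ := crossH hg huv.le h hvZ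
        have hord : xb ≤ xa :=
          curve_order hg hpos
            (memQQ (hu0.trans hxa1.le) (hxa2.le.trans hv1) hz0 hz1)
            (memQQ (hu0.trans hxb1.le) (hxb2.le.trans hv1) (hz0.trans hzZ) hZ1)
            hzZ hxa3 hxb3
        have hcp := curve_pair hg hpos hratio hApC hApD
          (memQQ (hu0.trans hxb1.le) (hxb2.le.trans hv1) (hz0.trans hzZ) hZ1)
          (memQQ (hu0.trans hxa1.le) (hxa2.le.trans hv1) hz0 hz1)
          hord hxb3 hxa3
        have := (hgapD t).2
        have hlt : xa - xb < v - u := by linarith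
        linarith [hcp.2.2.2]
      · exact absurd h (hnosol u (C.gl_mem_set s) Z (D.r_mem_set t))
      · exact h
    have hmono : MonotoneOn (fun d : ℝ => g (u, d)) (Set.Icc (0:ℝ) 1) :=
      sliceV_mono hg hpos hu0 hu1
    obtain ⟨p, hp1, hp2, hp3, hp4⟩ := mk_gap D (fun d => g (u, d))
      (hg.continuous.comp (continuous_const.prodMk continuous_id))
      hmono (fun x hx => hnosol u (C.gl_mem_set s) x hx)
      (D.gr_mem_set t) (D.r_mem_set t) h3 hesc
    -- p : z ≤ gl p, gr p ≤ Z, g(u, gl p) < y, y < g(u, gr p)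
    have hbr : D.l (true :: t) ≤ D.l p ∧ D.r p ≤ D.r (true :: t) := by
      apply D.bridge_in
      · exact hp1
      · rw [D.r_true]; exact hp2
    have hlp : z ≤ D.l p := hbr.1
    have hglp : z ≤ D.gl p := hlp.trans (D.l_le_gl p)
    have hglp0 : 0 ≤ D.gl p := D.gl_nonneg p
    have hglp1 : D.gl p ≤ 1 := D.gl_le_one p
    have hlp0 : 0 ≤ D.l p := D.l_nonneg p
    refine ⟨s, p, ⟨hp3, hp4, ?_⟩, Or.inr ⟨rfl, ?_, hcmp.le⟩⟩
    · exact lt_of_lt_of_le h2 (gmle hg hpos hv0 hv1 hz0 hglp1 le_rfl hglp)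
    · -- size bound : gr p - gl p < v - u
      have hq2 : y < g (v, D.gl p) :=
        lt_of_lt_of_le h2 (gmle hg hpos hv0 hv1 hz0 hglp1 le_rfl hglp)
      obtain ⟨xc, hxc1, hxc2, hxc3⟩ := crossH hg huv.le hp3 hq2
      have hlw : g (u, D.l p) < y :=
        lt_of_le_of_lt (gmle hg hpos hu0 hu1 hlp0 hglp1 le_rfl (D.l_le_gl p)) hp3
      have hlz : y < g (v, D.l p) :=
        lt_of_lt_of_le h2 (gmle hg hpos hv0 hv1 hz0 ((D.l_le_gl p).trans hglp1) le_rfl hlp)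
      obtain ⟨xd, hxd1, hxd2, hxd3⟩ := crossH hg huv.le hlw hlz
      have hord : xc ≤ xd :=
        curve_order hg hpos
          (memQQ (hu0.trans hxd1.le) (hxd2.le.trans hv1) hlp0 ((D.l_le_gl p).trans hglp1))
          (memQQ (hu0.trans hxc1.le) (hxc2.le.trans hv1) hglp0 hglp1)
          (D.l_le_gl p) hxd3 hxc3
      have hcp := curve_pair hg hpos hratio hApC hApD
        (memQQ (hu0.trans hxc1.le) (hxc2.le.trans hv1) hglp0 hglp1)
        (memQQ (hu0.trans hxd1.le) (hxd2.le.trans hv1) hlp0 ((D.l_le_gl p).trans hglp1))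
        hord hxc3 hxd3
      have := (hgapD p).1
      have hlt : xd - xc < v - u := by linarith
      linarith [hcp.2.2.2]

/-- Initialization: some valid state exists. -/
lemma init_state
    (hg : ContDiff ℝ 1 g)
    (hpos : ∀ p ∈ QQ, 0 < fderiv ℝ g p (1, 0) ∧ 0 < fderiv ℝ g p (0, 1))
    (hratio : ∀ p ∈ QQ, |fderiv ℝ g p (1, 0) / fderiv ℝ g p (0, 1)| ∈
        Set.Icc C.aperture C.aperture⁻¹ ∩ Set.Icc D.aperture D.aperture⁻¹)
    (hApC : 0 < C.aperture) (hApD : 0 < D.aperture)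
    (hgapC : ∀ s, C.gr s - C.gl s ≤ C.aperture * (C.gl s - C.l s) ∧
      C.gr s - C.gl s ≤ C.aperture * (C.r s - C.gr s))
    (hgapD : ∀ t, D.gr t - D.gl t ≤ D.aperture * (D.gl t - D.l t) ∧
      D.gr t - D.gl t ≤ D.aperture * (D.r t - D.gr t))
    (hnosol : ∀ a ∈ C.set, ∀ b ∈ D.set, g (a, b) ≠ y)
    (hy0 : g (0, 0) < y) (hy1 : y < g (1, 1)) :
    ∃ s t,
      (g (C.gl s, D.gl t) < y ∧ y < g (C.gl s, D.gr t) ∧ y < g (C.gr s, D.gl t)) ∨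
      (g (C.gr s, D.gl t) < y ∧ y < g (C.gr s, D.gr t) ∧ g (C.gl s, D.gr t) < y) := by
  classical
  rcases lt_trichotomy (g (1, 0)) y with hcase | hcase | hcase
  · -- CASE 1 : start with an "up" state
    obtain ⟨t₀, ht1, ht2, ht3, ht4⟩ := mk_gap D (fun d => g (1, d))
      (hg.continuous.comp (continuous_const.prodMk continuous_id))
      (sliceV_mono hg hpos zero_le_one le_rfl)
      (fun x hx => hnosol 1 (C.one_mem_set) x hx)
      (D.zero_mem_set) (D.one_mem_set) hcase hy1
    have hz0 : 0 ≤ D.gr t₀ := D.gr_nonneg t₀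
    have hz1 : D.gr t₀ ≤ 1 := D.gr_le_one t₀
    have h0z : g (0, D.gr t₀) < y := by
      rcases lt_trichotomy (g (0, D.gr t₀)) y with h | h | h
      · exact h
      · exact absurd h (hnosol 0 (C.zero_mem_set) _ (D.gr_mem_set t₀))
      · exfalso
        obtain ⟨ξ, hξ, heq⟩ := mvt_seg g hg (1, D.gl t₀) (0, D.gr t₀)
          (memQQ zero_le_one le_rfl (D.gl_nonneg t₀) (D.gl_le_one t₀))
          (memQQ le_rfl zero_le_one hz0 hz1)
        have hApos := (hpos ξ hξ).1
        have hBpos := (hpos ξ hξ).2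
        obtain ⟨⟨hc1, hc2⟩, ⟨hd1, hd2⟩⟩ := hratio ξ hξ
        rw [abs_of_pos (div_pos hApos hBpos)] at hd1
        have hDB : D.aperture * fderiv ℝ g ξ (0, 1) ≤ fderiv ℝ g ξ (1, 0) := by
          have := (le_div_iff₀ hBpos).mp hd1; linarith
        have hgap := (hgapD t₀).1
        have hb1 : D.gl t₀ - D.l t₀ ≤ 1 :=
          le_trans (by linarith [D.l_nonneg t₀]) (D.gl_le_one t₀)
        -- heq : g(0,gr) - g(1,gl) = Dα * (0 - 1) + Dβ * (gr - gl) > 0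
        have hpos' : (0:ℝ) < g (0, D.gr t₀) - g (1, D.gl t₀) := by linarith
        simp only [Prod.fst, Prod.snd] at heq
        set Aa := fderiv ℝ g ξ (1, 0)
        set Bb := fderiv ℝ g ξ (0, 1)
        have h5 : D.gr t₀ - D.gl t₀ ≤ D.aperture := by
          refine le_trans hgap ?_
          have := mul_le_mul_of_nonneg_left hb1 hApD.le
          linarith
        have h6 : Aa < Bb * (D.gr t₀ - D.gl t₀) := by nlinarith
        have h7 : Bb * (D.gr t₀ - D.gl t₀) ≤ Bb * D.aperture :=
          mul_le_mul_of_nonneg_left h5 hBpos.le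
        nlinarith
    obtain ⟨s₀, hs1, hs2, hs3, hs4⟩ := mk_gap C (fun c => g (c, D.gr t₀))
      (hg.continuous.comp (continuous_id.prodMk continuous_const))
      (sliceH_mono hg hpos hz0 hz1)
      (fun x hx => hnosol x hx _ (D.gr_mem_set t₀))
      (C.zero_mem_set) (C.one_mem_set) h0z ht4
    refine ⟨s₀, t₀, Or.inr ⟨?_, hs4, hs3⟩⟩
    exact lt_of_le_of_lt (gmle hg hpos (C.gr_nonneg s₀) le_rfl (D.gl_nonneg t₀)
      (D.gl_le_one t₀) hs2 le_rfl) ht3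
  · exact absurd hcase (hnosol 1 (C.one_mem_set) 0 (D.zero_mem_set))
  · -- CASE 2 : start with a "down" state
    obtain ⟨s₀, hs1, hs2, hs3, hs4⟩ := mk_gap C (fun c => g (c, 0))
      (hg.continuous.comp (continuous_id.prodMk continuous_const))
      (sliceH_mono hg hpos le_rfl zero_le_one)
      (fun x hx => hnosol x hx 0 (D.zero_mem_set))
      (C.zero_mem_set) (C.one_mem_set) hy0 hcase
    have hu0 : 0 ≤ C.gl s₀ := C.gl_nonneg s₀
    have hu1 : C.gl s₀ ≤ 1 := C.gl_le_one s₀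
    have h1top : y < g (C.gl s₀, 1) := by
      rcases lt_trichotomy (g (C.gl s₀, 1)) y with h | h | h
      · exfalso
        obtain ⟨ξ, hξ, heq⟩ := mvt_seg g hg (C.gl s₀, 1) (C.gr s₀, 0)
          (memQQ hu0 hu1 zero_le_one le_rfl)
          (memQQ (C.gr_nonneg s₀) (C.gr_le_one s₀) le_rfl zero_le_one)
        have hApos := (hpos ξ hξ).1
        have hBpos := (hpos ξ hξ).2
        obtain ⟨⟨hc1, hc2⟩, ⟨hd1, hd2⟩⟩ := hratio ξ hξ
        rw [abs_of_pos (div_pos hApos hBpos)] at hc2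
        have hCA : C.aperture * fderiv ℝ g ξ (1, 0) ≤ fderiv ℝ g ξ (0, 1) := by
          have h := (div_le_iff₀ hBpos).mp hc2
          calc C.aperture * fderiv ℝ g ξ (1, 0)
              ≤ C.aperture * (C.aperture⁻¹ * fderiv ℝ g ξ (0, 1)) := by
                apply mul_le_mul_of_nonneg_left _ hApC.le
                linarith
            _ = fderiv ℝ g ξ (0, 1) := by field_simp
        have hgap := (hgapC s₀).1
        have hb1 : C.gl s₀ - C.l s₀ ≤ 1 :=
          le_trans (by linarith [C.l_nonneg s₀]) hu1
        have hpos' : (0:ℝ) < g (C.gr s₀, 0) - g (C.gl s₀, 1) := by linarith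
        simp only [Prod.fst, Prod.snd] at heq
        set Aa := fderiv ℝ g ξ (1, 0)
        set Bb := fderiv ℝ g ξ (0, 1)
        have h5 : C.gr s₀ - C.gl s₀ ≤ C.aperture := by
          refine le_trans hgap ?_
          have := mul_le_mul_of_nonneg_left hb1 hApC.le
          linarith
        have h6 : Bb < Aa * (C.gr s₀ - C.gl s₀) := by nlinarith
        have h7 : Aa * (C.gr s₀ - C.gl s₀) ≤ Aa * C.aperture :=
          mul_le_mul_of_nonneg_left h5 hApos.le
        nlinarith
      · exact absurd h (hnosol _ (C.gl_mem_set s₀) 1 (D.one_mem_set))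
      · exact h
    obtain ⟨t₀, ht1, ht2, ht3, ht4⟩ := mk_gap D (fun d => g (C.gl s₀, d))
      (hg.continuous.comp (continuous_const.prodMk continuous_id))
      (sliceV_mono hg hpos hu0 hu1)
      (fun x hx => hnosol _ (C.gl_mem_set s₀) x hx)
      (D.zero_mem_set) (D.one_mem_set) hs3 h1top
    refine ⟨s₀, t₀, Or.inl ⟨ht3, ht4, ?_⟩⟩
    exact lt_of_lt_of_le hs4 (gmle hg hpos (C.gr_nonneg s₀) (C.gr_le_one s₀)
      le_rfl (D.gl_le_one t₀) le_rfl (D.gl_nonneg t₀))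

open MeasureTheory in
lemma sum_disjoint_le (F : Finset ℕ) (a b : ℕ → ℝ)
    (hab : ∀ i ∈ F, a i < b i) (hsub : ∀ i ∈ F, 0 ≤ a i ∧ b i ≤ 1)
    (hdisj : ∀ i ∈ F, ∀ j ∈ F, i ≠ j → Disjoint (Set.Ioo (a i) (b i)) (Set.Ioo (a j) (b j))) :
    ∑ i ∈ F, (b i - a i) ≤ 1 := by
  classical
  have hd : (F : Set ℕ).PairwiseDisjoint (fun i => Set.Ioo (a i) (b i)) := by
    intro i hi j hj hij
    exact hdisj i hi j hj hij
  have hmeas : ∀ i ∈ F, MeasurableSet (Set.Ioo (a i) (b i)) := fun i _ => measurableSet_Ioo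
  have h1 : volume (⋃ i ∈ F, Set.Ioo (a i) (b i)) = ∑ i ∈ F, volume (Set.Ioo (a i) (b i)) :=
    measure_biUnion_finset hd hmeas
  have h2 : (⋃ i ∈ F, Set.Ioo (a i) (b i)) ⊆ Set.Icc (0:ℝ) 1 := by
    intro x hx
    simp only [Set.mem_iUnion] at hx
    obtain ⟨i, hi, hx⟩ := hx
    exact ⟨(hsub i hi).1.trans hx.1.le, hx.2.le.trans (hsub i hi).2⟩
  have h3 : volume (⋃ i ∈ F, Set.Ioo (a i) (b i)) ≤ volume (Set.Icc (0:ℝ) 1) :=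
    measure_mono h2
  rw [h1, Real.volume_Icc] at h3
  have h4 : ∑ i ∈ F, volume (Set.Ioo (a i) (b i)) =
      ENNReal.ofReal (∑ i ∈ F, (b i - a i)) := by
    rw [ENNReal.ofReal_sum_of_nonneg (fun i hi => by linarith [hab i hi])]
    exact Finset.sum_congr rfl (fun i _ => Real.volume_Ioo)
  rw [h4] at h3
  have h5 : (1:ℝ) - 0 = 1 := by ring
  rw [h5] at h3
  exact (ENNReal.ofReal_le_ofReal_iff zero_le_one).mp h3

/-- The central contradiction: assuming there is no solution leads to `False`. -/
lemma walk_false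
    (hg : ContDiff ℝ 1 g)
    (hpos : ∀ p ∈ QQ, 0 < fderiv ℝ g p (1, 0) ∧ 0 < fderiv ℝ g p (0, 1))
    (hratio : ∀ p ∈ QQ, |fderiv ℝ g p (1, 0) / fderiv ℝ g p (0, 1)| ∈
        Set.Icc C.aperture C.aperture⁻¹ ∩ Set.Icc D.aperture D.aperture⁻¹)
    (hApC : 0 < C.aperture) (hApD : 0 < D.aperture)
    (hgapC : ∀ s, C.gr s - C.gl s ≤ C.aperture * (C.gl s - C.l s) ∧
      C.gr s - C.gl s ≤ C.aperture * (C.r s - C.gr s))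
    (hgapD : ∀ t, D.gr t - D.gl t ≤ D.aperture * (D.gl t - D.l t) ∧
      D.gr t - D.gl t ≤ D.aperture * (D.r t - D.gr t))
    (hnosol : ∀ a ∈ C.set, ∀ b ∈ D.set, g (a, b) ≠ y)
    (hy0 : g (0, 0) < y) (hy1 : y < g (1, 1)) : False := by
  classical
  -- states : a pair of gap strings plus an orientation bit
  set Inv : List Bool × List Bool × Bool → Prop := fun q =>
    if q.2.2 then
      (g (C.gl q.1, D.gl q.2.1) < y ∧ y < g (C.gl q.1, D.gr q.2.1) ∧
        y < g (C.gr q.1, D.gl q.2.1))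
    else
      (g (C.gr q.1, D.gl q.2.1) < y ∧ y < g (C.gr q.1, D.gr q.2.1) ∧
        g (C.gl q.1, D.gr q.2.1) < y) with hInvDef
  set Rel : List Bool × List Bool × Bool → List Bool × List Bool × Bool → Prop := fun q q' =>
    (q'.2.1 = q.2.1 ∧ C.gr q'.1 - C.gl q'.1 < D.gr q.2.1 - D.gl q.2.1 ∧
        D.gr q.2.1 - D.gl q.2.1 ≤ C.gr q.1 - C.gl q.1) ∨
    (q'.1 = q.1 ∧ D.gr q'.2.1 - D.gl q'.2.1 < C.gr q.1 - C.gl q.1 ∧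
        C.gr q.1 - C.gl q.1 ≤ D.gr q.2.1 - D.gl q.2.1) with hRelDef
  have hstep : ∀ q, Inv q → ∃ q', Inv q' ∧ Rel q q' := by
    rintro ⟨s, t, b⟩ hq
    cases b
    · -- up state
      simp only [hInvDef, if_neg (by simp : ¬ (false = true))] at hq
      obtain ⟨s', t', hinv', hrel⟩ := step_up hg hpos hratio hApC hApD hgapC hgapD hnosol
        s t hq.1 hq.2.1 hq.2.2
      refine ⟨(s', t', true), ?_, ?_⟩
      · simp only [hInvDef, if_pos rfl]
        exact hinv'
      · simp only [hRelDef]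
        rcases hrel with ⟨h1, h2, h3⟩ | ⟨h1, h2, h3⟩
        · exact Or.inl ⟨h1, h2, h3⟩
        · exact Or.inr ⟨h1, h2, h3⟩
    · -- down state
      simp only [hInvDef, if_pos rfl] at hq
      obtain ⟨s', t', hinv', hrel⟩ := step_down hg hpos hratio hApC hApD hgapC hgapD hnosol
        s t hq.1 hq.2.1 hq.2.2
      refine ⟨(s', t', false), ?_, ?_⟩
      · simp only [hInvDef, if_neg (by simp : ¬ (false = true))]
        exact hinv'
      · simp only [hRelDef]
        rcases hrel with ⟨h1, h2, h3⟩ | ⟨h1, h2, h3⟩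
        · exact Or.inl ⟨h1, h2, h3⟩
        · exact Or.inr ⟨h1, h2, h3⟩
  -- initial state
  obtain ⟨s₀, t₀, hinit⟩ := init_state hg hpos hratio hApC hApD hgapC hgapD hnosol hy0 hy1
  obtain ⟨q₀, hq₀⟩ : ∃ q, Inv q := by
    rcases hinit with h | h
    · exact ⟨(s₀, t₀, true), by simp only [hInvDef, if_pos rfl]; exact h⟩
    · exact ⟨(s₀, t₀, false), by simp only [hInvDef, if_neg (by simp : ¬ (false = true))]; exact h⟩
  -- the walk
  choose! F hF1 hF2 using hstep
  set seq : ℕ → List Bool × List Bool × Bool := fun n => F^[n] q₀ with hseqDef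
  have hseq0 : seq 0 = q₀ := rfl
  have hseqS : ∀ n, seq (n + 1) = F (seq n) := by
    intro n
    simp only [hseqDef, Function.iterate_succ', Function.comp_apply]
  have hInvn : ∀ n, Inv (seq n) := by
    intro n
    induction n with
    | zero => exact hq₀
    | succ n ih => rw [hseqS n]; exact hF1 _ ih
  have hReln : ∀ n, Rel (seq n) (seq (n + 1)) := by
    intro n
    rw [hseqS n]
    exact hF2 _ (hInvn n)
  -- sizes
  set cs : ℕ → ℝ := fun n => C.gr (seq n).1 - C.gl (seq n).1 with hcsDef
  set ds : ℕ → ℝ := fun n => D.gr (seq n).2.1 - D.gl (seq n).2.1 with hdsDef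
  set μ : ℕ → ℝ := fun n => min (cs n) (ds n) with hμDef
  set M : ℕ → ℝ := fun n => max (cs n) (ds n) with hMDef
  have hcs_pos : ∀ n, 0 < cs n := fun n => sub_pos.mpr (C.gl_lt_gr _)
  have hds_pos : ∀ n, 0 < ds n := fun n => sub_pos.mpr (D.gl_lt_gr _)
  have hμ_pos : ∀ n, 0 < μ n := fun n => lt_min (hcs_pos n) (hds_pos n)
  have hstep_sizes : ∀ n, μ (n + 1) < μ n ∧ M (n + 1) = μ n := by
    intro n
    rcases hReln n with ⟨h1, h2, h3⟩ | ⟨h1, h2, h3⟩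
    · -- C replaced : t' = t
      have h2' : cs (n + 1) < ds n := h2
      have hds' : ds (n + 1) = ds n := by simp only [hdsDef, h1]
      have hμn : μ n = ds n := min_eq_right h3
      constructor
      · rw [hμn]
        calc μ (n+1) ≤ cs (n+1) := min_le_left _ _
          _ < ds n := h2
      · rw [hμn, hMDef]
        simp only
        rw [hds', max_eq_right h2'.le]
    · -- D replaced : s' = s
      have h2' : ds (n + 1) < cs n := h2
      have hcs' : cs (n + 1) = cs n := by simp only [hcsDef, h1]
      have hμn : μ n = cs n := min_eq_left h3
      constructor
      · rw [hμn]
        calc μ (n+1) ≤ ds (n+1) := min_le_right _ _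
          _ < cs n := h2
      · rw [hμn, hMDef]
        simp only
        rw [hcs', max_eq_left h2'.le]
  have hM_succ : ∀ n, M (n + 1) ≤ M n := by
    intro n
    rw [(hstep_sizes n).2]
    exact min_le_max
  have hM_anti : Antitone M := antitone_nat_of_succ_le hM_succ
  have hM_bdd : BddBelow (Set.range M) := by
    refine ⟨0, fun x hx => ?_⟩
    obtain ⟨n, rfl⟩ := hx
    exact le_trans (hμ_pos n).le (min_le_max)
  set δ := ⨅ n, M n with hδDef
  have hMtend : Filter.Tendsto M Filter.atTop (nhds δ) :=
    tendsto_atTop_ciInf hM_anti hM_bdd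
  have hδ0 : 0 ≤ δ := by
    refine le_ciInf (fun n => ?_)
    exact le_trans (hμ_pos n).le (min_le_max)
  have hδμ : ∀ n, δ < μ n := by
    intro n
    have h1 : δ ≤ M (n + 2) := ciInf_le hM_bdd (n + 2)
    have h2 : M (n + 2) = μ (n + 1) := (hstep_sizes (n + 1)).2
    have h3 : μ (n + 1) < μ n := (hstep_sizes n).1
    linarith
  rcases eq_or_lt_of_le hδ0 with hδeq | hδpos
  · -- sizes tend to zero : extract a solution, contradiction
    have hM0 : Filter.Tendsto M Filter.atTop (nhds 0) := by rwa [hδeq]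
    have hmark : ∀ n, ∃ x β, C.gl (seq n).1 < x ∧ x < C.gr (seq n).1 ∧
        β ∈ D.set ∧ g (x, β) = y := by
      intro n
      have h := hInvn n
      rcases Bool.eq_false_or_eq_true (seq n).2.2 with hb | hb
      · simp only [hInvDef] at h
        rw [hb] at h
        rw [if_pos rfl] at h
        obtain ⟨x, hx1, hx2, hx3⟩ := crossH hg (C.gl_lt_gr (seq n).1).le h.1 h.2.2
        exact ⟨x, D.gl (seq n).2.1, hx1, hx2, D.gl_mem_set _, hx3⟩
      · simp only [hInvDef] at h
        rw [hb] at h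
        rw [if_neg Bool.false_ne_true] at h
        obtain ⟨x, hx1, hx2, hx3⟩ := crossH hg (C.gl_lt_gr (seq n).1).le h.2.2 h.2.1
        exact ⟨x, D.gr (seq n).2.1, hx1, hx2, D.gr_mem_set _, hx3⟩
    choose xf βf hx1 hx2 hβmem hxeq using hmark
    have hPmem : ∀ n, ((xf n, βf n) : ℝ × ℝ) ∈ QQ := by
      intro n
      refine memQQ ?_ ?_ (D.set_subset_Icc (hβmem n)).1 (D.set_subset_Icc (hβmem n)).2
      · exact (C.gl_nonneg _).trans (hx1 n).le
      · exact (hx2 n).le.trans (C.gr_le_one _)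
    have hQcomp : IsCompact QQ := isCompact_Icc
    obtain ⟨L, hLmem, φ, hφmono, hφtend⟩ := hQcomp.tendsto_subseq hPmem
    have htfst : Filter.Tendsto (fun k => xf (φ k)) Filter.atTop (nhds L.1) :=
      (continuous_fst.tendsto L).comp hφtend
    have htsnd : Filter.Tendsto (fun k => βf (φ k)) Filter.atTop (nhds L.2) :=
      (continuous_snd.tendsto L).comp hφtend
    have hL2 : L.2 ∈ D.set :=
      D.isClosed_set.mem_of_tendsto htsnd (Filter.Eventually.of_forall (fun k => hβmem _))
    have hMφ : Filter.Tendsto (fun k => M (φ k)) Filter.atTop (nhds 0) :=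
      hM0.comp hφmono.tendsto_atTop
    have hdiff : Filter.Tendsto (fun k => xf (φ k) - C.gl (seq (φ k)).1)
        Filter.atTop (nhds 0) := by
      apply squeeze_zero (fun k => sub_nonneg.mpr (hx1 _).le) (fun k => ?_) hMφ
      have h1 : xf (φ k) - C.gl (seq (φ k)).1 ≤ cs (φ k) := by
        have := (hx2 (φ k)).le
        simp only [hcsDef]
        linarith
      exact h1.trans (le_max_left _ _)
    have htu : Filter.Tendsto (fun k => C.gl (seq (φ k)).1) Filter.atTop (nhds L.1) := by
      have := htfst.sub hdiff
      simpa using this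
    have hL1 : L.1 ∈ C.set :=
      C.isClosed_set.mem_of_tendsto htu (Filter.Eventually.of_forall (fun k => C.gl_mem_set _))
    have hgL : g L = y := by
      have h1 : Filter.Tendsto (fun k => g (xf (φ k), βf (φ k))) Filter.atTop (nhds (g L)) := by
        have := (hg.continuous.tendsto L).comp hφtend
        exact this
      have h2 : Filter.Tendsto (fun k => g (xf (φ k), βf (φ k))) Filter.atTop (nhds y) := by
        simp only [hxeq]
        exact tendsto_const_nhds
      exact tendsto_nhds_unique h1 h2
    have : g (L.1, L.2) = y := by rwa [Prod.mk.eta]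
    exact hnosol L.1 hL1 L.2 hL2 this
  · -- sizes stay above δ > 0 : infinitely many disjoint gaps of length > δ
    have hμanti : StrictAnti μ := strictAnti_nat_of_succ_lt (fun n => (hstep_sizes n).1)
    have halt : ∀ k : ℕ, ∃ m, 2*k ≤ m ∧ m ≤ 2*k + 1 ∧
        ((seq (m+1)).2.1 = (seq m).2.1 ∧ cs (m+1) < ds m ∧ ds m ≤ cs m) := by
      intro k
      rcases hReln (2*k) with ⟨h1, h2, h3⟩ | ⟨h1, h2, h3⟩
      · exact ⟨2*k, le_rfl, by omega, h1, h2, h3⟩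
      · rcases hReln (2*k+1) with ⟨h1', h2', h3'⟩ | ⟨h1', h2', h3'⟩
        · exact ⟨2*k+1, by omega, by omega, h1', h2', h3'⟩
        · exfalso
          have hc3 : cs (2*k+1) ≤ ds (2*k+1) := h3'
          have hd : ds (2*k+1) < cs (2*k) := h2
          have hcseq : cs (2*k+1) = cs (2*k) := by simp only [hcsDef, h1]
          rw [hcseq] at hc3
          linarith
    choose m hm1 hm2 hm3 using halt
    have hmlt : ∀ k j, k < j → m k < m j := by
      intro k j hkj
      have := hm2 k
      have := hm1 j
      omega
    -- the created C-gaps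
    set av : ℕ → ℝ := fun k => C.gl (seq (m k + 1)).1 with havDef
    set bv : ℕ → ℝ := fun k => C.gr (seq (m k + 1)).1 with hbvDef
    have hsz : ∀ k, bv k - av k = μ (m k + 1) := by
      intro k
      have h1 := (hm3 k).2.1
      have hds' : ds (m k + 1) = ds (m k) := by simp only [hdsDef, (hm3 k).1]
      have : μ (m k + 1) = cs (m k + 1) := by
        rw [hμDef]
        simp only
        rw [min_eq_left (by rw [hds']; exact h1.le)]
      calc bv k - av k = cs (m k + 1) := rfl
        _ = μ (m k + 1) := this.symm
    have hszδ : ∀ k, δ < bv k - av k := by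
      intro k; rw [hsz k]; exact hδμ _
    have hinj : ∀ k j, k < j → bv k - av k ≠ bv j - av j := by
      intro k j hkj
      rw [hsz k, hsz j]
      have : μ (m j + 1) < μ (m k + 1) := hμanti (by have := hmlt k j hkj; omega)
      linarith
    have hdisj : ∀ k j, k ≠ j → Disjoint (Set.Ioo (av k) (bv k)) (Set.Ioo (av j) (bv j)) := by
      intro k j hkj
      rw [Set.disjoint_left]
      intro x hxk hxj
      have heq := C.gaps_eq_or_disjoint (av k) (bv k) (av j) (bv j)
        (C.gl_mem_set _) (C.gr_mem_set _) (C.gl_mem_set _) (C.gr_mem_set _)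
        (C.gap_free _) (C.gap_free _) x hxk hxj
      have : bv k - av k = bv j - av j := by rw [heq.1, heq.2]
      rcases lt_or_gt_of_ne hkj with h | h
      · exact hinj k j h this
      · exact hinj j k h this.symm
    obtain ⟨N, hN⟩ := exists_nat_gt (1 / δ)
    have hsum := sum_disjoint_le (Finset.range N) av bv
      (fun i _ => by linarith [hszδ i, hδpos])
      (fun i _ => ⟨C.gl_nonneg _, C.gr_le_one _⟩)
      (fun i _ j _ hij => hdisj i j hij)
    have hlow : (N : ℝ) * δ ≤ ∑ i ∈ Finset.range N, (bv i - av i) := by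
      calc (N : ℝ) * δ = ∑ _i ∈ Finset.range N, δ := by
            rw [Finset.sum_const, Finset.card_range, nsmul_eq_mul]
        _ ≤ ∑ i ∈ Finset.range N, (bv i - av i) :=
            Finset.sum_le_sum (fun i _ => (hszδ i).le)
    have hNδ : 1 < (N : ℝ) * δ := by
      rw [div_lt_iff₀ hδpos] at hN
      linarith
    linarith

end Steps
end HallAux


open HallAux

/-- Hall's segment existence theorem: if `g` is `C¹` with positive partial
derivatives whose ratio is compatible with the aperture ratios of the Cantor
sets `C` and `D`, then `{g(α,β) : α ∈ C, β ∈ D}` is the whole interval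
`[g(0,0), g(1,1)]`. -/
theorem cantor_image_interval (C D : CantorScheme) (g : ℝ × ℝ → ℝ)
    (hg : ContDiff ℝ 1 g)
    (hpos : ∀ p ∈ Set.Icc ((0 : ℝ), (0 : ℝ)) ((1 : ℝ), (1 : ℝ)),
      0 < fderiv ℝ g p (1, 0) ∧ 0 < fderiv ℝ g p (0, 1))
    (hratio : ∀ p ∈ Set.Icc ((0 : ℝ), (0 : ℝ)) ((1 : ℝ), (1 : ℝ)),
      |fderiv ℝ g p (1, 0) / fderiv ℝ g p (0, 1)| ∈
        Set.Icc C.aperture C.aperture⁻¹ ∩ Set.Icc D.aperture D.aperture⁻¹) :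
    {y : ℝ | ∃ α ∈ C.set, ∃ β ∈ D.set, g (α, β) = y} =
      Set.Icc (g (0, 0)) (g (1, 1)) := by
  classical
  have hpos' : ∀ p ∈ QQ, 0 < fderiv ℝ g p (1, 0) ∧ 0 < fderiv ℝ g p (0, 1) := hpos
  have hratio' : ∀ p ∈ QQ, |fderiv ℝ g p (1, 0) / fderiv ℝ g p (0, 1)| ∈
      Set.Icc C.aperture C.aperture⁻¹ ∩ Set.Icc D.aperture D.aperture⁻¹ := hratio
  have h00 : ((0:ℝ), (0:ℝ)) ∈ QQ := memQQ le_rfl zero_le_one le_rfl zero_le_one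
  have hD1pos := (hpos' _ h00).1
  have hD2pos := (hpos' _ h00).2
  -- both apertures are positive (otherwise the ratio hypothesis is absurd)
  have hApC : 0 < C.aperture := by
    by_cases hB : BddAbove (Set.range fun s : List Bool =>
      max ((C.l (true :: s) - C.r (false :: s)) / (C.r (false :: s) - C.l s))
          ((C.l (true :: s) - C.r (false :: s)) / (C.r s - C.l (true :: s))))
    · exact aperture_pos C hB
    · exfalso
      have h0 : C.aperture = 0 := Real.iSup_of_not_bddAbove hB
      have h2 := ((hratio' _ h00).1).2
      rw [h0] at h2
      simp only [inv_zero] at h2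
      have h3 : |fderiv ℝ g (0,0) (1, 0) / fderiv ℝ g (0,0) (0, 1)| = 0 :=
        le_antisymm h2 (abs_nonneg _)
      rw [abs_eq_zero, div_eq_zero_iff] at h3
      rcases h3 with h3 | h3
      · exact absurd h3 (ne_of_gt hD1pos)
      · exact absurd h3 (ne_of_gt hD2pos)
  have hApD : 0 < D.aperture := by
    by_cases hB : BddAbove (Set.range fun s : List Bool =>
      max ((D.l (true :: s) - D.r (false :: s)) / (D.r (false :: s) - D.l s))
          ((D.l (true :: s) - D.r (false :: s)) / (D.r s - D.l (true :: s))))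
    · exact aperture_pos D hB
    · exfalso
      have h0 : D.aperture = 0 := Real.iSup_of_not_bddAbove hB
      have h2 := ((hratio' _ h00).2).2
      rw [h0] at h2
      simp only [inv_zero] at h2
      have h3 : |fderiv ℝ g (0,0) (1, 0) / fderiv ℝ g (0,0) (0, 1)| = 0 :=
        le_antisymm h2 (abs_nonneg _)
      rw [abs_eq_zero, div_eq_zero_iff] at h3
      rcases h3 with h3 | h3
      · exact absurd h3 (ne_of_gt hD1pos)
      · exact absurd h3 (ne_of_gt hD2pos)
  -- bounded apertures : the gap estimates hold
  have hBC : BddAbove (Set.range fun s : List Bool =>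
      max ((C.l (true :: s) - C.r (false :: s)) / (C.r (false :: s) - C.l s))
          ((C.l (true :: s) - C.r (false :: s)) / (C.r s - C.l (true :: s)))) := by
    by_contra hB
    have h0 : C.aperture = 0 := Real.iSup_of_not_bddAbove hB
    rw [h0] at hApC
    exact lt_irrefl _ hApC
  have hBD : BddAbove (Set.range fun s : List Bool =>
      max ((D.l (true :: s) - D.r (false :: s)) / (D.r (false :: s) - D.l s))
          ((D.l (true :: s) - D.r (false :: s)) / (D.r s - D.l (true :: s)))) := by
    by_contra hB
    have h0 : D.aperture = 0 := Real.iSup_of_not_bddAbove hB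
    rw [h0] at hApD
    exact lt_irrefl _ hApD
  have hgapC := aperture_gap_le C hBC
  have hgapD := aperture_gap_le D hBD
  ext y
  simp only [Set.mem_setOf_eq, Set.mem_Icc]
  constructor
  · rintro ⟨α, hα, β, hβ, rfl⟩
    have hα' := C.set_subset_Icc hα
    have hβ' := D.set_subset_Icc hβ
    constructor
    · exact gmle hg hpos' le_rfl hα'.2 le_rfl hβ'.2 hα'.1 hβ'.1
    · exact gmle hg hpos' hα'.1 le_rfl hβ'.1 le_rfl hα'.2 hβ'.2
  · rintro ⟨hy1, hy2⟩
    by_contra hno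
    push_neg at hno
    have hnosol : ∀ a ∈ C.set, ∀ b ∈ D.set, g (a, b) ≠ y := hno
    have hy1' : g (0, 0) < y :=
      lt_of_le_of_ne hy1 (hnosol 0 C.zero_mem_set 0 D.zero_mem_set)
    have hy2' : y < g (1, 1) :=
      lt_of_le_of_ne hy2 (fun h => (hnosol 1 C.one_mem_set 1 D.one_mem_set) h.symm)
    exact walk_false hg hpos' hratio' hApC hApD hgapC hgapD hnosol hy1' hy2'
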